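/- Let p be a prime with p ≡ 2 (mod 3) and d odd. Then there is no automorphism k of the group (ZMod p)^d satisfying k − k² = id (equivalently, k² − k + 1 = 0 as an endomorphism). -/

import Mathlib

private lemma two_pow_odd_mod_three : ∀ m : ℕ, 2 ^ (2 * m + 1) % 3 = 2 := by
  intro m
  induction m with
  | zero => rfl
  | succ n ih =>
      have h : 2 * (n + 1) + 1 = (2 * n + 1) + 2 := by ring
      rw [h, pow_add, Nat.mul_mod, ih]
      rfl

theorem stmt_13 (p : ℕ) (hp : p.Prime) (hp3 : p % 3 = 2) (d : ℕ) (hd : Odd d) :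
    ¬∃ k : (Fin d → ZMod p) ≃+ (Fin d → ZMod p),
      ∀ x, k (k x) - k x + x = 0 := by
  rintro ⟨k, hk⟩
  haveI : Fact p.Prime := ⟨hp⟩
  haveI : Fact (Nat.Prime 3) := ⟨Nat.prime_three⟩
  haveI : Nonempty (Fin d) := ⟨⟨0, hd.pos⟩⟩
  haveI : Nontrivial (Fin d → ZMod p) := inferInstance
  set V := Fin d → ZMod p with hV
  -- basic algebraic consequences
  have hkk : ∀ x : V, k (k x) = k x - x := by
    intro x
    linear_combination (hk x)
  have h3 : ∀ x : V, k (k (k x)) = -x := by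
    intro x
    rw [hkk (k x), hkk x]
    ring
  have hk6 : ∀ x : V, k (k (k (k (k (k x))))) = x := by
    intro x
    rw [h3, h3, neg_neg]
  have h3p : (3 : ZMod p) ≠ 0 := by
    intro h
    have h' : (p : ℕ) ∣ 3 :=
      (ZMod.natCast_eq_zero_iff 3 p).mp (by exact_mod_cast h)
    have := (Nat.prime_dvd_prime_iff_eq hp Nat.prime_three).mp h'
    omega
  have hfix : ∀ x : V, k (k x) = x → x = 0 := by
    intro x hx
    have h1 : k x = x + x := by
      have h := hkk x
      rw [hx] at h
      linear_combination -h
    have h2 : k (k x) = (x + x) + (x + x) := by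
      rw [h1, map_add, h1]
    have h4 : x + x + x = 0 := by
      rw [hx] at h2
      linear_combination h2.symm
    funext i
    have h5 : x i + x i + x i = (0 : ZMod p) := congrFun h4 i
    have h6 : (3 : ZMod p) * x i = 0 := by linear_combination h5
    rcases mul_eq_zero.mp h6 with h | h
    · exact absurd h h3p
    · exact h
  -- the permutation e = k ∘ k, of order 3
  set e : Equiv.Perm V := (k.trans k).toEquiv with he
  have he_apply : ∀ x : V, e x = k (k x) := fun x => rfl
  have he3 : e ^ 3 = 1 := by
    refine Equiv.ext fun x => ?_
    show (e ^ 3) x = x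
    have : (e ^ 3) x = e (e (e x)) := by
      rw [pow_succ, pow_succ, pow_one, Equiv.Perm.mul_apply, Equiv.Perm.mul_apply]
    rw [this, he_apply, he_apply, he_apply]
    exact hk6 x
  have he_ne : e ≠ 1 := by
    intro h
    obtain ⟨x, y, hxy⟩ := exists_pair_ne V
    have hx := hfix x (by rw [← he_apply, h]; rfl)
    have hy := hfix y (by rw [← he_apply, h]; rfl)
    exact hxy (hx.trans hy.symm)
  have horder : orderOf e = 3 := by
    have hdvd : orderOf e ∣ 3 := orderOf_dvd_of_pow_eq_one he3
    rcases (Nat.prime_three.eq_one_or_self_of_dvd _ hdvd) with h | h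
    · exact absurd (orderOf_eq_one_iff.mp h) he_ne
    · exact h
  -- the 3-group generated by e
  set H : Subgroup (Equiv.Perm V) := Subgroup.zpowers e with hH
  have hPG : IsPGroup 3 H := by
    apply IsPGroup.of_card (n := 1)
    rw [Nat.card_zpowers, horder, pow_one]
  -- fixed points of H are exactly {0}
  have hfixset : MulAction.fixedPoints H V = {0} := by
    ext x
    constructor
    · intro hx
      have := hx ⟨e, Subgroup.mem_zpowers e⟩
      have hex : e x = x := this
      exact hfix x (by rw [← he_apply]; exact hex)
    · rintro rfl
      intro g
      show (g : Equiv.Perm V) • (0 : V) = 0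
      obtain ⟨n, hn⟩ := g.2
      have h0 : e • (0 : V) = 0 := by
        show e 0 = 0
        rw [he_apply]
        simp
      have h0' : e ^ (-1 : ℤ) • (0 : V) = 0 := by
        show (e ^ (-1 : ℤ)) 0 = 0
        rw [zpow_neg, zpow_one]
        exact (Equiv.symm_apply_eq e).mpr (h0.symm)
      have : ∀ m : ℤ, (e ^ m) • (0 : V) = 0 := by
        intro m
        induction m using Int.induction_on with
        | zero => simp
        | succ n ih =>
            rw [zpow_add, zpow_one, mul_smul, h0, ih]
        | pred n ih =>
            rw [sub_eq_add_neg, zpow_add, mul_smul, h0', ih]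
      rw [← hn]
      exact this n
  -- counting
  have hmod := hPG.card_modEq_card_fixedPoints V
  rw [hfixset] at hmod
  have hcard1 : Nat.card ({0} : Set V) = 1 := by simp
  have hcardV : Nat.card V = p ^ d := by
    show Nat.card (Fin d → ZMod p) = p ^ d
    rw [Nat.card_eq_fintype_card]
    simp [ZMod.card]
  rw [hcard1, hcardV] at hmod
  -- but p^d ≡ 2 mod 3
  have hpd : p ^ d % 3 = 2 := by
    have h2 : p % 3 = 2 := hp3
    obtain ⟨m, rfl⟩ := hd
    have : p ^ (2 * m + 1) % 3 = (p % 3) ^ (2 * m + 1) % 3 := by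
      rw [Nat.pow_mod]
    rw [this, h2]
    exact two_pow_odd_mod_three m
  have : p ^ d % 3 = 1 % 3 := hmod
  omega
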